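/- Let $a_1,\ldots,a_n$ be distinct elements of a field $F$, $u_i = \prod_{j\neq i}(a_i-a_j)^{-1}$, and write $\prod_{i=1}^n(x-a_i) = \sum_{j=0}^n c_j x^{n-j}$. Define $e_0 = 1$ and $e_m = -\sum_{j=0}^{m-1} e_j c_{m-j}$ for $m \geq 1$. Then for every $0 \leq t \leq n-2$, $\sum_{i=1}^n u_i a_i^{n+t} = e_{t+1}$. -/

import Mathlib

open Polynomial Finset

-- coefficient n-1 of the Lagrange basis polynomial is u i
lemma aux_coeff_basis {F : Type*} [Field F] (n : ℕ) (a : Fin n → F) (ha : Function.Injective a)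
    (i : Fin n) :
    (Lagrange.basis Finset.univ a i).coeff (n - 1) =
      (∏ j ∈ Finset.univ.erase i, (a i - a j))⁻¹ := by
  classical
  have hb : Lagrange.basis Finset.univ a i =
      C (∏ j ∈ Finset.univ.erase i, (a i - a j)⁻¹) *
        ∏ j ∈ Finset.univ.erase i, (X - C (a j)) := by
    rw [Lagrange.basis]
    simp_rw [Lagrange.basisDivisor]
    rw [Finset.prod_mul_distrib, map_prod]
  have hmonic : (∏ j ∈ Finset.univ.erase i, (X - C (a j))).Monic :=
    monic_prod_of_monic _ _ (fun j _ => monic_X_sub_C _)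
  have hdeg : (∏ j ∈ Finset.univ.erase i, (X - C (a j))).natDegree = n - 1 := by
    rw [natDegree_prod_of_monic _ _ (fun j _ => monic_X_sub_C _)]
    simp [Finset.card_erase_of_mem]
  rw [hb, coeff_C_mul, ← hdeg, hmonic.coeff_natDegree, mul_one, ← Finset.prod_inv_distrib]

-- the low power sums
lemma aux_S_low {F : Type*} [Field F] (n : ℕ) (a : Fin n → F) (ha : Function.Injective a)
    (u : Fin n → F)
    (hu : ∀ i, u i = (∏ j ∈ Finset.univ.erase i, (a i - a j))⁻¹)
    (k : ℕ) (hk : k + 1 ≤ n) :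
    ∑ i : Fin n, u i * a i ^ k = if k = n - 1 then 1 else 0 := by
  classical
  have hinj : Set.InjOn a (Finset.univ : Finset (Fin n)) := ha.injOn
  have hcard : #(Finset.univ : Finset (Fin n)) = n := by simp
  have hX : (X ^ k : F[X]) =
      Lagrange.interpolate Finset.univ a (fun i => (X ^ k : F[X]).eval (a i)) := by
    refine Lagrange.eq_interpolate hinj ?_
    rw [hcard, degree_X_pow]
    exact_mod_cast hk
  have := congrArg (fun p => Polynomial.coeff p (n - 1)) hX
  simp only [Lagrange.interpolate_apply, Polynomial.finset_sum_coeff, coeff_C_mul,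
    coeff_X_pow, eval_pow, eval_X] at this
  have heq : ∑ i : Fin n, u i * a i ^ k =
      ∑ x : Fin n, a x ^ k * (Lagrange.basis Finset.univ a x).coeff (n - 1) :=
    Finset.sum_congr rfl fun i _ => by rw [aux_coeff_basis n a ha i, ← hu i, mul_comm]
  rw [heq, ← this]
  by_cases h : k = n - 1
  · simp [h]
  · rw [if_neg h, if_neg (fun hh => h hh.symm)]

open Polynomial in
/-- With `u_i = ∏_{j≠i}(a_i - a_j)⁻¹`, `∏ (x - a_i) = ∑_{j=0}^n c_j x^{n-j}` and `e`
the inverse recurrence sequence, `∑ u_i a_i^{n+t} = e_{t+1}` for all `0 ≤ t ≤ n-2`. -/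
theorem stmt_8 {F : Type*} [Field F] (n : ℕ)
    (a : Fin n → F) (ha : Function.Injective a)
    (u : Fin n → F)
    (hu : ∀ i, u i = (∏ j ∈ Finset.univ.erase i, (a i - a j))⁻¹)
    (c e : ℕ → F)
    (hc : (∏ i : Fin n, (X - C (a i))) =
      ∑ j ∈ Finset.range (n + 1), Polynomial.C (c j) * X ^ (n - j))
    (he0 : e 0 = 1)
    (he : ∀ m, 1 ≤ m → e m = -∑ j ∈ Finset.range m, e j * c (m - j)) :
    ∀ t, t + 2 ≤ n → ∑ i : Fin n, u i * a i ^ (n + t) = e (t + 1) := by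
  classical
  intro t ht
  have hn : 1 ≤ n := by omega
  -- c 0 = 1
  have hc0 : c 0 = 1 := by
    have := congrArg (fun p => Polynomial.coeff p n) hc
    simp only [Polynomial.finset_sum_coeff, coeff_C_mul, coeff_X_pow] at this
    have hm : (∏ i : Fin n, (X - C (a i))).Monic :=
      monic_prod_of_monic _ _ (fun j _ => monic_X_sub_C _)
    have hdeg : (∏ i : Fin n, (X - C (a i))).natDegree = n := by
      rw [natDegree_prod_of_monic _ _ (fun j _ => monic_X_sub_C _)]
      simp
    have hlead : (∏ i : Fin n, (X - C (a i))).coeff n = 1 := by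
      have h := hm.coeff_natDegree; rw [hdeg] at h; exact h
    rw [hlead] at this
    rw [Finset.sum_eq_single 0
      (by intro j hj hj0; rw [Finset.mem_range] at hj; rw [if_neg (by omega), mul_zero])
      (by simp)] at this
    simpa using this.symm
  -- each a i is a root
  have hroot : ∀ i : Fin n, ∑ j ∈ Finset.range (n + 1), c j * a i ^ (n - j) = 0 := by
    intro i
    have := congrArg (fun p => Polynomial.eval (a i) p) hc
    simp only [eval_prod, eval_sub, eval_X, eval_C, Polynomial.eval_finset_sum, eval_mul,
      eval_pow] at this
    rw [← this, Finset.prod_eq_zero (Finset.mem_univ i) (by ring)]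
  -- a i ^ n as combination of lower powers
  have hpow : ∀ i : Fin n, a i ^ n = -∑ j ∈ Finset.range n, c (j + 1) * a i ^ (n - (j + 1)) := by
    intro i
    have h := hroot i
    rw [Finset.sum_range_succ' (fun j => c j * a i ^ (n - j)) n] at h
    simp only [Nat.sub_zero, hc0, one_mul] at h
    linear_combination h
  -- the strong induction
  have key : ∀ m, m + 1 ≤ n → ∑ i : Fin n, u i * a i ^ (n - 1 + m) = e m := by
    intro m
    induction m using Nat.strong_induction_on with
    | _ m ih =>
      intro hm
      rcases Nat.eq_zero_or_pos m with rfl | hmpos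
      · rw [aux_S_low n a ha u hu (n - 1 + 0) (by omega), if_pos (by omega), he0]
      · have hstep : ∑ i : Fin n, u i * a i ^ (n - 1 + m) =
            -∑ j ∈ Finset.range n, c (j + 1) *
              ∑ i : Fin n, u i * a i ^ (m - 1 + (n - (j + 1))) := by
          have h1 : ∀ i : Fin n, u i * a i ^ (n - 1 + m) =
              ∑ j ∈ Finset.range n, -(c (j + 1) * (u i * a i ^ (m - 1 + (n - (j + 1))))) := by
            intro i
            rw [show n - 1 + m = (m - 1) + n by omega, pow_add, hpow i, mul_neg, mul_neg,
              Finset.mul_sum, Finset.mul_sum, ← Finset.sum_neg_distrib]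
            refine Finset.sum_congr rfl fun j hj => ?_
            rw [pow_add]; ring
          rw [Finset.sum_congr rfl (fun i _ => h1 i), Finset.sum_comm, ← Finset.sum_neg_distrib]
          refine Finset.sum_congr rfl fun j _ => ?_
          rw [Finset.sum_neg_distrib, ← Finset.mul_sum]
        rw [hstep]
        -- split range n = range m ∪ Ico m n
        have hsplit : ∑ j ∈ Finset.range n, c (j + 1) *
              ∑ i : Fin n, u i * a i ^ (m - 1 + (n - (j + 1))) =
            ∑ j ∈ Finset.range m, c (j + 1) * e (m - 1 - j) := by
          rw [← Finset.sum_range_add_sum_Ico _ (by omega : m ≤ n)]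
          have h2 : ∑ j ∈ Finset.Ico m n, c (j + 1) *
              ∑ i : Fin n, u i * a i ^ (m - 1 + (n - (j + 1))) = 0 := by
            refine Finset.sum_eq_zero fun j hj => ?_
            rw [Finset.mem_Ico] at hj
            rw [aux_S_low n a ha u hu _ (by omega), if_neg (by omega), mul_zero]
          rw [h2, add_zero]
          refine Finset.sum_congr rfl fun j hj => ?_
          rw [Finset.mem_range] at hj
          have : m - 1 + (n - (j + 1)) = n - 1 + (m - 1 - j) := by omega
          rw [this, ih (m - 1 - j) (by omega) (by omega)]
        rw [hsplit, he m hmpos, neg_inj]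
        rw [← Finset.sum_range_reflect (fun j => e j * c (m - j)) m]
        refine Finset.sum_congr rfl fun j hj => ?_
        rw [Finset.mem_range] at hj
        rw [show m - (m - 1 - j) = j + 1 by omega, mul_comm]
  have := key (t + 1) (by omega)
  rwa [show n - 1 + (t + 1) = n + t by omega] at this
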